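/- Let I₀ ⊆ I₁ ⊆ ⋯ ⊆ I_k be subspaces of ℂ[x,y], each an ideal, and set J = σ*I₀ + y·σ*I₁ + ⋯ + y^k·σ*I_k where σ*(f(x,y)) = f(x, y^{k+1}). Then J is an ideal of ℂ[x,y] if and only if I₀ ⊆ I₁ ⊆ ⋯ ⊆ I_k and y·I_k ⊆ I₀. -/

import Mathlib

open MvPolynomial


noncomputable abbrev MyPoly : Type := MvPolynomial (Fin 2) ℂ

noncomputable def sg (k : ℕ) : MyPoly →ₐ[ℂ] MyPoly := aeval ![X 0, X 1 ^ (k+1)]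

noncomputable def emb (k j : ℕ) (m : Fin 2 →₀ ℕ) : Fin 2 →₀ ℕ :=
  Finsupp.single 0 (m 0) + Finsupp.single 1 ((k+1) * m 1 + j)

lemma emb_apply0 (k j : ℕ) (m) : emb k j m 0 = m 0 := by
  simp [emb, Finsupp.single_apply]

lemma emb_apply1 (k j : ℕ) (m) : emb k j m 1 = (k+1) * m 1 + j := by
  simp [emb, Finsupp.single_apply]

lemma emb_eq_iff {k i j : ℕ} (hi : i ≤ k) (hj : j ≤ k) {m m'} :
    emb k i m = emb k j m' ↔ i = j ∧ m = m' := by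
  constructor
  · intro h
    have h0 : m 0 = m' 0 := by
      have := congrFun (congrArg (↑·) h) 0; simpa [emb_apply0] using this
    have h1 : (k+1) * m 1 + i = (k+1) * m' 1 + j := by
      have := congrFun (congrArg (↑·) h) 1; simpa [emb_apply1] using this
    have hij : i = j := by
      have : ((k+1) * m 1 + i) % (k+1) = ((k+1) * m' 1 + j) % (k+1) := by rw [h1]
      simpa [Nat.mul_add_mod, Nat.mod_eq_of_lt (Nat.lt_succ_of_le hi),
        Nat.mod_eq_of_lt (Nat.lt_succ_of_le hj)] using this
    subst hij
    have h1' : m 1 = m' 1 := by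
      have := Nat.add_right_cancel h1
      exact Nat.eq_of_mul_eq_mul_left (Nat.succ_pos k) this
    refine ⟨rfl, ?_⟩
    ext a
    fin_cases a
    · exact h0
    · exact h1'
  · rintro ⟨rfl, rfl⟩; rfl

lemma term_monomial (k j : ℕ) (m : Fin 2 →₀ ℕ) (c : ℂ) :
    (X 1 : MyPoly) ^ j * sg k (monomial m c) = monomial (emb k j m) c := by
  have hm : (monomial m c : MyPoly) = C c * X 0 ^ (m 0) * X 1 ^ (m 1) := by
    rw [monomial_eq]
    rw [Finsupp.prod_fintype _ _ (fun i => pow_zero _), Fin.prod_univ_two]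
    ring
  have hm' : (monomial (emb k j m) c : MyPoly)
      = C c * X 0 ^ (m 0) * X 1 ^ ((k+1) * m 1 + j) := by
    rw [monomial_eq]
    rw [Finsupp.prod_fintype _ _ (fun i => pow_zero _), Fin.prod_univ_two,
      emb_apply0, emb_apply1]
    ring
  rw [hm, hm']
  simp only [sg, map_mul, map_pow, aeval_C, aeval_X]
  simp [Matrix.cons_val_zero, Matrix.cons_val_one, pow_mul, pow_add]
  ring

lemma emb_inj (k j : ℕ) : Function.Injective (emb k j) := by
  intro m m' h
  have h0 : m 0 = m' 0 := by
    have := congrFun (congrArg (↑·) h) 0; simpa [emb_apply0] using this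
  have h1 : (k+1) * m 1 + j = (k+1) * m' 1 + j := by
    have := congrFun (congrArg (↑·) h) 1; simpa [emb_apply1] using this
  have h1' : m 1 = m' 1 :=
    Nat.eq_of_mul_eq_mul_left (Nat.succ_pos k) (Nat.add_right_cancel h1)
  ext a; fin_cases a
  · exact h0
  · exact h1'

lemma coeff_term_self (k j : ℕ) (g : MyPoly) (m : Fin 2 →₀ ℕ) :
    coeff (emb k j m) ((X 1 : MyPoly) ^ j * sg k g) = coeff m g := by
  induction g using MvPolynomial.induction_on' with
  | monomial u a =>
    rw [term_monomial, coeff_monomial, coeff_monomial]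
    by_cases h : u = m
    · simp [h]
    · rw [if_neg h, if_neg (fun he => h (emb_inj k j he))]
  | add p q hp hq =>
    rw [map_add, mul_add, coeff_add, coeff_add, hp, hq]

lemma coeff_term_ne (k j : ℕ) (g : MyPoly) (m : Fin 2 →₀ ℕ)
    (hm : ∀ m', emb k j m' ≠ m) :
    coeff m ((X 1 : MyPoly) ^ j * sg k g) = 0 := by
  induction g using MvPolynomial.induction_on' with
  | monomial u a =>
    rw [term_monomial, coeff_monomial, if_neg (hm u)]
  | add p q hp hq =>
    rw [map_add, mul_add, coeff_add, hp, hq, add_zero]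

lemma components_eq (k : ℕ) (g h : Fin (k+1) → MyPoly)
    (heq : ∑ j : Fin (k+1), (X 1 : MyPoly) ^ (j : ℕ) * sg k (g j)
         = ∑ j : Fin (k+1), (X 1 : MyPoly) ^ (j : ℕ) * sg k (h j)) : g = h := by
  funext j
  ext m
  have key : ∀ f : Fin (k+1) → MyPoly,
      coeff (emb k (j : ℕ) m) (∑ i : Fin (k+1), (X 1 : MyPoly) ^ (i : ℕ) * sg k (f i))
      = coeff m (f j) := by
    intro f
    rw [MvPolynomial.coeff_sum]
    rw [Finset.sum_eq_single j]
    · exact coeff_term_self k (j : ℕ) (f j) m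
    · intro b _ hbj
      refine coeff_term_ne k (b : ℕ) (f b) _ ?_
      intro m' he
      rcases (emb_eq_iff (Nat.lt_succ_iff.mp b.isLt) (Nat.lt_succ_iff.mp j.isLt)).mp he with ⟨hb, -⟩
      exact hbj (Fin.ext hb)
    · intro hj; exact absurd (Finset.mem_univ j) hj
  rw [← key g, ← key h, heq]

lemma sg_apply (k : ℕ) (p : MyPoly) :
    aeval ![(X 0 : MyPoly), (X 1) ^ (k + 1)] p = sg k p := rfl

lemma sg_X0 (k : ℕ) : sg k (X 0) = (X 0 : MyPoly) := by simp [sg]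

lemma sg_X1 (k : ℕ) : sg k (X 1) = (X 1 : MyPoly) ^ (k+1) := by simp [sg]

lemma sg_C (k : ℕ) (a : ℂ) : sg k (C a) = (C a : MyPoly) := by simp [sg]

lemma sum_single (k : ℕ) (j : Fin (k+1)) (g : MyPoly) :
    ∑ i : Fin (k+1), (X 1 : MyPoly) ^ (i : ℕ) * sg k ((Pi.single j g : Fin (k+1) → MyPoly) i)
      = (X 1 : MyPoly) ^ (j : ℕ) * sg k g := by
  rw [Finset.sum_eq_single j]
  · rw [Pi.single_eq_same]
  · intro b _ hbj
    rw [Pi.single_eq_of_ne hbj, map_zero, mul_zero]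
  · intro hj; exact absurd (Finset.mem_univ j) hj

def SP (k : ℕ) (I : Fin (k+1) → Ideal MyPoly) (f : MyPoly) : Prop :=
  ∃ g : Fin (k+1) → MyPoly, (∀ j, g j ∈ I j) ∧
    f = ∑ j : Fin (k+1), (X 1 : MyPoly) ^ (j : ℕ) * sg k (g j)

lemma SP_zero (k I) : SP k I 0 :=
  ⟨0, fun j => (I j).zero_mem, by simp⟩

lemma SP_add (k I) {a b : MyPoly} (ha : SP k I a) (hb : SP k I b) : SP k I (a + b) := by
  obtain ⟨g, hg, rfl⟩ := ha
  obtain ⟨h, hh, rfl⟩ := hb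
  exact ⟨g + h, fun j => (I j).add_mem (hg j) (hh j), by
    rw [← Finset.sum_add_distrib]
    refine Finset.sum_congr rfl fun j _ => ?_
    rw [Pi.add_apply, map_add, mul_add]⟩

lemma SP_mulX0 (k I) {a : MyPoly} (ha : SP k I a) : SP k I (X 0 * a) := by
  obtain ⟨g, hg, rfl⟩ := ha
  refine ⟨fun j => X 0 * g j, fun j => (I j).mul_mem_left _ (hg j), ?_⟩
  rw [Finset.mul_sum]
  refine Finset.sum_congr rfl fun j _ => ?_
  rw [map_mul, sg_X0]; ring

lemma SP_mulC (k I) (c : ℂ) {a : MyPoly} (ha : SP k I a) : SP k I (C c * a) := by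
  obtain ⟨g, hg, rfl⟩ := ha
  refine ⟨fun j => C c * g j, fun j => (I j).mul_mem_left _ (hg j), ?_⟩
  rw [Finset.mul_sum]
  refine Finset.sum_congr rfl fun j _ => ?_
  rw [map_mul, sg_C]; ring

lemma SP_mulX1 (k : ℕ) (I : Fin (k+1) → Ideal MyPoly)
    (hle : ∀ j : Fin k, I j.castSucc ≤ I j.succ)
    (hlast : ∀ f ∈ I (Fin.last k), (X 1 : MyPoly) * f ∈ I 0)
    {a : MyPoly} (ha : SP k I a) : SP k I (X 1 * a) := by
  obtain ⟨g, hg, rfl⟩ := ha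
  refine ⟨Fin.cases (X 1 * g (Fin.last k)) (fun i => g i.castSucc), ?_, ?_⟩
  · intro j
    induction j using Fin.cases with
    | zero => simpa using hlast _ (hg (Fin.last k))
    | succ i => simpa using hle i (hg i.castSucc)
  · rw [Finset.mul_sum, Fin.sum_univ_castSucc, Fin.sum_univ_succ]
    simp only [Fin.coe_castSucc, Fin.val_succ, Fin.val_last, Fin.val_zero,
      Fin.cases_zero, Fin.cases_succ, pow_zero, one_mul]
    rw [map_mul, sg_X1, add_comm]
    congr 1
    · ring
    · refine Finset.sum_congr rfl fun i _ => ?_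
      ring

lemma SP_mul (k : ℕ) (I : Fin (k+1) → Ideal MyPoly)
    (hle : ∀ j : Fin k, I j.castSucc ≤ I j.succ)
    (hlast : ∀ f ∈ I (Fin.last k), (X 1 : MyPoly) * f ∈ I 0)
    (c : MyPoly) {a : MyPoly} (ha : SP k I a) : SP k I (c * a) := by
  induction c using MvPolynomial.induction_on with
  | C r => exact SP_mulC k I r ha
  | add p q hp hq => rw [add_mul]; exact SP_add k I hp hq
  | mul_X p i hp =>
    have he : p * X i * a = X i * (p * a) := by ring
    rw [he]
    fin_cases i
    · exact SP_mulX0 k I hp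
    · exact SP_mulX1 k I hle hlast hp

/-- For ideals `I₀,…,I_k` of `ℂ[x,y]`, the subspace
`J = σ*I₀ + y σ*I₁ + ⋯ + yᵏ σ*I_k` (with `σ* : x ↦ x, y ↦ y^{k+1}`) is an
ideal of `ℂ[x,y]` if and only if `I₀ ⊆ I₁ ⊆ ⋯ ⊆ I_k` and `y·I_k ⊆ I₀`. -/
theorem stmt11 (k : ℕ) (I : Fin (k + 1) → Ideal (MvPolynomial (Fin 2) ℂ)) :
    (∃ J : Ideal (MvPolynomial (Fin 2) ℂ),
      (J : Set (MvPolynomial (Fin 2) ℂ)) =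
        {f | ∃ g : Fin (k + 1) → MvPolynomial (Fin 2) ℂ,
          (∀ j, g j ∈ I j) ∧
          f = ∑ j : Fin (k + 1), (X 1 : MvPolynomial (Fin 2) ℂ) ^ (j : ℕ) *
            aeval ![(X 0 : MvPolynomial (Fin 2) ℂ), (X 1) ^ (k + 1)] (g j)})
    ↔ ((∀ j : Fin k, I j.castSucc ≤ I j.succ) ∧
        (∀ f ∈ I (Fin.last k), (X 1 : MvPolynomial (Fin 2) ℂ) * f ∈ I 0)) := by
  constructor
  · rintro ⟨J, hJ⟩
    simp only [sg_apply] at hJ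
    have hmem : ∀ (j : Fin (k+1)) (g : MyPoly), g ∈ I j →
        (X 1 : MyPoly) ^ (j : ℕ) * sg k g ∈ J := by
      intro j g hg
      rw [← SetLike.mem_coe, hJ]
      refine ⟨Pi.single j g, ?_, (sum_single k j g).symm⟩
      intro i
      by_cases h : i = j
      · subst h; rw [Pi.single_eq_same]; exact hg
      · rw [Pi.single_eq_of_ne h]; exact (I i).zero_mem
    constructor
    · intro j g hg
      have h2 : (X 1 : MyPoly) * ((X 1) ^ ((j.castSucc : Fin (k+1)) : ℕ) * sg k g) ∈ J :=
        J.mul_mem_left _ (hmem j.castSucc g hg)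
      have h3 : (X 1 : MyPoly) ^ ((j.succ : Fin (k+1)) : ℕ) * sg k g ∈ J := by
        have : (X 1 : MyPoly) ^ ((j.succ : Fin (k+1)) : ℕ) * sg k g
            = (X 1 : MyPoly) * ((X 1) ^ ((j.castSucc : Fin (k+1)) : ℕ) * sg k g) := by
          rw [Fin.coe_castSucc, Fin.val_succ]; ring
        rw [this]; exact h2
      rw [← SetLike.mem_coe, hJ] at h3
      obtain ⟨h, hh, heq⟩ := h3
      have hc := components_eq k (Pi.single j.succ g) h (by rw [sum_single]; exact heq)
      have : g = h j.succ := by rw [← hc, Pi.single_eq_same]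
      rw [this]; exact hh _
    · intro g hg
      have h2 : (X 1 : MyPoly) * ((X 1) ^ ((Fin.last k : Fin (k+1)) : ℕ) * sg k g) ∈ J :=
        J.mul_mem_left _ (hmem (Fin.last k) g hg)
      have h3 : (X 1 : MyPoly) ^ (((0 : Fin (k+1))) : ℕ) * sg k (X 1 * g) ∈ J := by
        have : (X 1 : MyPoly) ^ (((0 : Fin (k+1))) : ℕ) * sg k (X 1 * g)
            = (X 1 : MyPoly) * ((X 1) ^ ((Fin.last k : Fin (k+1)) : ℕ) * sg k g) := by
          rw [map_mul, sg_X1, Fin.val_last, Fin.val_zero]; ring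
        rw [this]; exact h2
      rw [← SetLike.mem_coe, hJ] at h3
      obtain ⟨h, hh, heq⟩ := h3
      have hc := components_eq k (Pi.single 0 (X 1 * g)) h (by rw [sum_single]; exact heq)
      have : (X 1 : MyPoly) * g = h 0 := by rw [← hc, Pi.single_eq_same]
      rw [this]; exact hh _
  · rintro ⟨hle, hlast⟩
    refine ⟨{ carrier := {f | SP k I f},
              add_mem' := fun ha hb => SP_add k I ha hb,
              zero_mem' := SP_zero k I,
              smul_mem' := fun c x hx => by
                simpa [smul_eq_mul] using SP_mul k I hle hlast c hx }, ?_⟩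
    rfl
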